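/- log n ≤ (1/n²) ∑ i (-log p i) + ((n-1)/n²) ∑ i (-log q i), where q i = (1 - p i)/(n-1), assuming all p i ∈ (0,1). -/

import Mathlib

theorem log_n_le_sum_self_information
    (n : ℕ) (hn : 2 ≤ n) (p : Fin n → ℝ)
    (hp : ∀ i, 0 < p i ∧ p i < 1) (hsum : ∑ i, p i = 1) :
    Real.log n ≤
      (1 / (n : ℝ) ^ 2) * ∑ i, -Real.log (p i) +
        (((n : ℝ) - 1) / (n : ℝ) ^ 2) *
          ∑ i, -Real.log ((1 - p i) / ((n : ℝ) - 1)) := by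
  have hN2 : (2:ℝ) ≤ (n:ℝ) := by exact_mod_cast hn
  have hN1 : (1:ℝ) ≤ (n:ℝ) - 1 := by linarith
  have hNpos : (0:ℝ) < (n:ℝ) := by linarith
  have hN1pos : (0:ℝ) < (n:ℝ) - 1 := by linarith
  have hN2pos : (0:ℝ) < (n:ℝ)^2 := by positivity
  set w : Fin n ⊕ Fin n → ℝ :=
    Sum.elim (fun _ => 1/(n:ℝ)^2) (fun _ => ((n:ℝ)-1)/(n:ℝ)^2) with hw
  set z : Fin n ⊕ Fin n → ℝ :=
    Sum.elim p (fun j => (1 - p j)/((n:ℝ)-1)) with hz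
  have hsum1 : ∑ i, (1 - p i) = (n:ℝ) - 1 := by
    rw [Finset.sum_sub_distrib, hsum]
    simp [Finset.card_univ]
  have hwsum : ∑ i, w i = 1 := by
    rw [Fintype.sum_sum_type]
    simp only [hw, Sum.elim_inl, Sum.elim_inr, Finset.sum_const, Finset.card_univ,
      Fintype.card_fin, nsmul_eq_mul]
    field_simp
    ring
  have hwzsum : ∑ i, w i • z i = 1/(n:ℝ) := by
    rw [Fintype.sum_sum_type]
    simp only [hw, hz, Sum.elim_inl, Sum.elim_inr, smul_eq_mul]
    rw [← Finset.mul_sum, hsum]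
    have h2 : ∑ j, ((n:ℝ)-1)/(n:ℝ)^2 * ((1 - p j)/((n:ℝ)-1)) =
        ∑ j, (1/(n:ℝ)^2) * (1 - p j) := by
      apply Finset.sum_congr rfl
      intro j _
      field_simp
    rw [h2, ← Finset.mul_sum, hsum1]
    field_simp
    ring
  have hjensen : ∑ i, w i • Real.log (z i) ≤ Real.log (∑ i, w i • z i) := by
    refine ConcaveOn.le_map_sum (StrictConcaveOn.concaveOn strictConcaveOn_log_Ioi) ?_ ?_ ?_
    · intro i _
      cases i with
      | inl i => simp only [hw, Sum.elim_inl]; positivity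
      | inr i => simp only [hw, Sum.elim_inr]; positivity
    · exact hwsum
    · intro i _
      cases i with
      | inl i => simpa [hz] using (hp i).1
      | inr i =>
        simp only [hz, Sum.elim_inr, Set.mem_Ioi]
        exact div_pos (by linarith [(hp i).2]) hN1pos
  rw [hwzsum] at hjensen
  have hlog : Real.log (1/(n:ℝ)) = -Real.log n := by
    rw [one_div, Real.log_inv]
  rw [hlog] at hjensen
  have hsplit : ∑ i, w i • Real.log (z i) =
      (1/(n:ℝ)^2) * ∑ i, Real.log (p i) +
      (((n:ℝ)-1)/(n:ℝ)^2) * ∑ i, Real.log ((1 - p i)/((n:ℝ)-1)) := by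
    rw [Fintype.sum_sum_type]
    simp only [hw, hz, Sum.elim_inl, Sum.elim_inr, smul_eq_mul]
    rw [← Finset.mul_sum, ← Finset.mul_sum]
  rw [hsplit] at hjensen
  have e1 : ∑ i, -Real.log (p i) = -∑ i, Real.log (p i) := by
    rw [Finset.sum_neg_distrib]
  have e2 : ∑ i, -Real.log ((1 - p i)/((n:ℝ)-1)) =
      -∑ i, Real.log ((1 - p i)/((n:ℝ)-1)) := by
    rw [Finset.sum_neg_distrib]
  rw [e1, e2]
  nlinarith [hjensen]
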